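/- Let γ : ℝ → E be a twice differentiable unit-speed magnetic curve with charge q (γ''(t) = -q·φ(γ'(t)) and ‖γ'(t)‖ = 1 for all t), and let cos θ_α denote the constant value of γ'_{2n+α}. Then the first curvature of γ is the constant κ₁ = ‖γ''(t)‖ = |q|·√(1 - Σ_{α=1}^{s} cos²θ_α) for all t ∈ ℝ. -/

import Mathlib

open scoped RealInnerProductSpace

/-- The structure tensor `φ` of the standard `C`-manifold structure on `ℝ^{2n+s}`:
`(φv)_i = v_{n+i}`, `(φv)_{n+i} = -v_i` for `0 ≤ i < n`, and `(φv)_{2n+α} = 0`. -/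
noncomputable def phi (n s : ℕ) (v : EuclideanSpace ℝ (Fin (2*n+s))) :
    EuclideanSpace ℝ (Fin (2*n+s)) := WithLp.toLp 2 (fun k =>
  if _h1 : (k : ℕ) < n then v ⟨n + (k : ℕ), by omega⟩
  else if _h2 : (k : ℕ) < 2*n then -v ⟨(k : ℕ) - n, by omega⟩
  else 0)

/-- The index `2n+α` of the characteristic direction `ξ_α = e_{2n+α}`. -/
def idxA (n s : ℕ) (α : Fin s) : Fin (2*n+s) := ⟨2*n + (α : ℕ), by omega⟩

/-- The index `i` for `1 ≤ i ≤ n` (0-based). -/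
def idxI (n s : ℕ) (i : Fin n) : Fin (2*n+s) := ⟨(i : ℕ), by omega⟩

/-- The index `n+i` for `1 ≤ i ≤ n` (0-based). -/
def idxNI (n s : ℕ) (i : Fin n) : Fin (2*n+s) := ⟨n + (i : ℕ), by omega⟩

lemma phi_norm_sq (n s : ℕ) (v : EuclideanSpace ℝ (Fin (2*n+s))) :
    ∑ k : Fin (2*n+s), (phi n s v k)^2
      = ∑ k : Fin (2*n+s), (v k)^2 - ∑ α : Fin s, (v (idxA n s α))^2 := by
  set F : ℕ → ℝ := fun k => if h : k < 2*n+s then (phi n s v ⟨k, h⟩)^2 else 0 with hF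
  set G : ℕ → ℝ := fun k => if h : k < 2*n+s then (v ⟨k, h⟩)^2 else 0 with hG
  have hFfin : ∑ k : Fin (2*n+s), (phi n s v k)^2 = ∑ k ∈ Finset.range (2*n+s), F k := by
    rw [← Fin.sum_univ_eq_sum_range]
    refine Finset.sum_congr rfl fun k _ => ?_
    simp [hF, k.isLt]
  have hGfin : ∑ k : Fin (2*n+s), (v k)^2 = ∑ k ∈ Finset.range (2*n+s), G k := by
    rw [← Fin.sum_univ_eq_sum_range]
    refine Finset.sum_congr rfl fun k _ => ?_
    simp [hG, k.isLt]
  -- split ranges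
  have h1 : ∑ k ∈ Finset.range (2*n+s), F k
      = ∑ k ∈ Finset.range (2*n), F k + ∑ k ∈ Finset.Ico (2*n) (2*n+s), F k := by
    rw [Finset.range_eq_Ico, ← Finset.sum_Ico_consecutive _ (by omega : 0 ≤ 2*n) (by omega : 2*n ≤ 2*n+s), Finset.range_eq_Ico]
  have h1' : ∑ k ∈ Finset.range (2*n+s), G k
      = ∑ k ∈ Finset.range (2*n), G k + ∑ k ∈ Finset.Ico (2*n) (2*n+s), G k := by
    rw [Finset.range_eq_Ico, ← Finset.sum_Ico_consecutive _ (by omega : 0 ≤ 2*n) (by omega : 2*n ≤ 2*n+s), Finset.range_eq_Ico]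
  have h2 : ∑ k ∈ Finset.range (2*n), F k
      = ∑ k ∈ Finset.range n, F k + ∑ k ∈ Finset.Ico n (2*n), F k := by
    rw [Finset.range_eq_Ico, ← Finset.sum_Ico_consecutive _ (by omega : 0 ≤ n) (by omega : n ≤ 2*n), Finset.range_eq_Ico]
  have h2' : ∑ k ∈ Finset.range (2*n), G k
      = ∑ k ∈ Finset.range n, G k + ∑ k ∈ Finset.Ico n (2*n), G k := by
    rw [Finset.range_eq_Ico, ← Finset.sum_Ico_consecutive _ (by omega : 0 ≤ n) (by omega : n ≤ 2*n), Finset.range_eq_Ico]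
  have hA : ∑ k ∈ Finset.range n, F k = ∑ k ∈ Finset.Ico n (2*n), G k := by
    rw [Finset.sum_Ico_eq_sum_range]
    refine Finset.sum_congr (by congr 1 <;> omega) fun k hk => ?_
    simp only [Finset.mem_range] at hk
    have hk' : k < n := by omega
    have hk1 : k < 2*n+s := by omega
    have hk2 : n + k < 2*n+s := by omega
    simp only [hF, hG, hk1, hk2, dif_pos]
    rw [phi]
    simp [hk']
  have hB : ∑ k ∈ Finset.Ico n (2*n), F k = ∑ k ∈ Finset.range n, G k := by
    rw [Finset.sum_Ico_eq_sum_range]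
    refine Finset.sum_congr (by congr 1 <;> omega) fun k hk => ?_
    simp only [Finset.mem_range] at hk
    have hk1 : k < 2*n+s := by omega
    have hk2 : n + k < 2*n+s := by omega
    simp only [hF, hG, hk1, hk2, dif_pos]
    rw [phi]
    have : ¬ (n + k < n) := by omega
    have h2n : n + k < 2*n := by omega
    simp only [this, h2n, dif_pos, dif_neg, not_false_iff, neg_sq]
    exact congrArg (fun x : Fin (2*n+s) => v x ^ 2)
      (Fin.ext (by simp only [Fin.val_mk]; omega : ((⟨n + k - n, by omega⟩ : Fin (2*n+s)) : ℕ) = ((⟨k, by omega⟩ : Fin (2*n+s)) : ℕ)))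
  have hC : ∑ k ∈ Finset.Ico (2*n) (2*n+s), F k = 0 := by
    refine Finset.sum_eq_zero fun k hk => ?_
    simp only [Finset.mem_Ico] at hk
    simp only [hF, hk.2, dif_pos]
    rw [phi]
    have h1 : ¬ (k < n) := by omega
    have h2 : ¬ (k < 2*n) := by omega
    simp [h1, h2]
  have hD : ∑ k ∈ Finset.Ico (2*n) (2*n+s), G k = ∑ α : Fin s, (v (idxA n s α))^2 := by
    rw [Finset.sum_Ico_eq_sum_range, show 2*n+s-2*n = s from by omega,
      ← Fin.sum_univ_eq_sum_range (fun k => G (2*n + k)) s]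
    refine Finset.sum_congr rfl fun α _ => ?_
    have h3 : 2*n + (α:ℕ) < 2*n+s := by omega
    simp only [hG, h3, dif_pos]
    rfl
  rw [hFfin, hGfin, h1, h1', h2, h2', hA, hB, hC, hD]
  ring

/-- First curvature of a normal magnetic curve in the standard `C`-manifold `ℝ^{2n+s}`:
`κ₁ = ‖γ''‖ = |q|·√(1 - Σ_α cos²θ_α)`. -/
theorem normal_magnetic_curve_first_curvature
    (n s : ℕ) (hn : 0 < n) (hs : 0 < s) (q : ℝ)
    (γ : ℝ → EuclideanSpace ℝ (Fin (2*n+s)))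
    (hγ : Differentiable ℝ γ) (hγ' : Differentiable ℝ (deriv γ))
    (hmag : ∀ t : ℝ, deriv (deriv γ) t = (-q) • phi n s (deriv γ t))
    (hunit : ∀ t : ℝ, ‖deriv γ t‖ = 1)
    (θ : Fin s → ℝ)
    (hslant : ∀ t : ℝ, ∀ α : Fin s, deriv γ t (idxA n s α) = Real.cos (θ α)) :
    ∀ t : ℝ, ‖deriv (deriv γ) t‖ =
      |q| * Real.sqrt (1 - ∑ α : Fin s, Real.cos (θ α) ^ 2) := by
  intro t
  rw [hmag t, norm_smul, norm_neg, Real.norm_eq_abs]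
  congr 1
  rw [EuclideanSpace.norm_eq]
  congr 1
  have hsq : ∑ k : Fin (2*n+s), (deriv γ t k)^2 = 1 := by
    have := hunit t
    rw [EuclideanSpace.norm_eq] at this
    rw [Real.sqrt_eq_one] at this
    simpa [sq_abs] using this
  calc ∑ k : Fin (2*n+s), ‖phi n s (deriv γ t) k‖^2
      = ∑ k : Fin (2*n+s), (phi n s (deriv γ t) k)^2 := by simp [sq_abs]
    _ = 1 - ∑ α : Fin s, Real.cos (θ α)^2 := by
        rw [phi_norm_sq, hsq]
        congr 1
        exact Finset.sum_congr rfl fun α _ => by rw [hslant t α]
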